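/- Let $p$ be an odd prime and let $\Gamma$ be the nonabelian group of order $p^3$ and exponent $p^2$ (the modular/extraspecial group of exponent $p^2$). Then there is no automorphism of $\Gamma$ of order $2$ that acts as inversion on the abelianization $\Gamma/\Gamma'$ (equivalently, every order-2 automorphism of $\Gamma$ fixes one of the two generators of $\Gamma/\Gamma' \cong (\mathbb{Z}/p\mathbb{Z})^2$ pointwise, acting as $-1$ on at most one generator). -/

import Mathlib

open scoped commutatorElement

/-- Let `p` be an odd prime and `Γ` the nonabelian group of order `p³` and exponent `p²`
(characterized up to isomorphism by these properties).  Then no automorphism of `Γ` of order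
dividing 2 induces inversion `x ↦ x⁻¹` on the abelianization `Γ/Γ' ≅ (ℤ/p)²`. -/
theorem no_inverting_involution_on_modular_group (p : ℕ) (hp : p.Prime) (hodd : Odd p)
    (Γ : Type*) [Group Γ] [Finite Γ]
    (hcard : Nat.card Γ = p ^ 3)
    (hexp : Monoid.exponent Γ = p ^ 2)
    (hnab : ¬ ∀ a b : Γ, a * b = b * a) :
    ¬ ∃ φ : Γ ≃* Γ, φ.trans φ = MulEquiv.refl Γ ∧
      ∀ x : Abelianization Γ, Abelianization.map φ.toMonoidHom x = x⁻¹ := by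
  rintro ⟨φ, hφ2, hinv⟩
  haveI : Fact p.Prime := ⟨hp⟩
  have hp2 : p ≠ 2 := by rintro rfl; exact (Nat.not_odd_iff_even.2 (by norm_num)) hodd
  -- φ ∘ φ = id pointwise
  have hφφ : ∀ x : Γ, φ (φ x) = x := fun x => congrArg (· x) (congrArg DFunLike.coe hφ2)
  -- inversion on abelianization: φ x * x ∈ commutator
  have hkey : ∀ x : Γ, φ x * x ∈ commutator Γ := by
    intro x
    have h1 := hinv (Abelianization.of x)
    rw [Abelianization.map_of] at h1
    have h1' : Abelianization.of (φ x) = (Abelianization.of x)⁻¹ := h1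
    have h2 : Abelianization.of (φ x * x) = 1 := by
      rw [map_mul, h1', inv_mul_cancel]
    exact (QuotientGroup.eq_one_iff _).1 h2
  -- element of order p²
  obtain ⟨a, ha⟩ : ∃ a : Γ, orderOf a = p ^ 2 := by
    by_contra h
    push_neg at h
    have hdvd : Monoid.exponent Γ ∣ p := by
      apply Monoid.exponent_dvd_of_forall_pow_eq_one
      intro x
      have hx : orderOf x ∣ p ^ 2 := hexp ▸ Monoid.order_dvd_exponent x
      obtain ⟨i, hi, hix⟩ := (Nat.dvd_prime_pow hp).1 hx
      have hi1 : i ≤ 1 := by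
        by_contra h2
        exact h x (by rw [hix]; congr 1; omega)
      refine orderOf_dvd_iff_pow_eq_one.1 ?_
      calc orderOf x = p ^ i := hix
        _ ∣ p ^ 1 := pow_dvd_pow p hi1
        _ = p := pow_one p
    rw [hexp] at hdvd
    have := Nat.le_of_dvd hp.pos hdvd
    nlinarith [hp.one_lt]
  -- center has cardinality p
  have hZ1 : Nat.card (Subgroup.center Γ) = p := by
    obtain ⟨k, hk0, hZ⟩ := IsPGroup.card_center_eq_prime_pow hcard (by norm_num)
    have hZdvd : Nat.card (Subgroup.center Γ) ∣ p ^ 3 := hcard ▸ Subgroup.card_subgroup_dvd_card _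
    have hk3 : k ≤ 3 := by
      rw [hZ] at hZdvd
      exact (Nat.pow_dvd_pow_iff_le_right hp.one_lt).1 hZdvd
    have hk3' : k ≠ 3 := by
      intro h3
      apply hnab
      intro x y
      have htop : Subgroup.center Γ = ⊤ :=
        Subgroup.eq_top_of_card_eq _ (by rw [hZ, h3, hcard])
      have : y ∈ Subgroup.center Γ := htop ▸ Subgroup.mem_top y
      exact Subgroup.mem_center_iff.1 this x
    have hk2' : k ≠ 2 := by
      intro h2
      apply hnab
      have hq : Nat.card (Γ ⧸ Subgroup.center Γ) = p := by
        have h := Subgroup.card_eq_card_quotient_mul_card_subgroup (Subgroup.center Γ)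
        rw [hcard, hZ, h2] at h
        nlinarith [Nat.card_pos (α := Γ ⧸ Subgroup.center Γ), hp.pos]
      haveI : IsCyclic (Γ ⧸ Subgroup.center Γ) := isCyclic_of_prime_card hq
      exact commutative_of_cyclic_center_quotient (QuotientGroup.mk' _)
        ((QuotientGroup.ker_mk' (Subgroup.center Γ)).le)
    have hk1 : k = 1 := by omega
    rw [hZ, hk1, pow_one]
  -- centralizer of a is ⟨a⟩
  have hzc : Nat.card (Subgroup.zpowers a) = p ^ 2 := by rw [Nat.card_zpowers, ha]
  have hle : Subgroup.zpowers a ≤ Subgroup.centralizer {a} := by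
    rw [Subgroup.zpowers_le]
    exact Subgroup.mem_centralizer_iff.2 (by rintro g (rfl : g = a); rfl)
  have hC : Subgroup.centralizer {a} = Subgroup.zpowers a := by
    have hCdvd : Nat.card (Subgroup.centralizer ({a} : Set Γ)) ∣ p ^ 3 :=
      hcard ▸ Subgroup.card_subgroup_dvd_card _
    obtain ⟨j, hj3, hjC⟩ := (Nat.dvd_prime_pow hp).1 hCdvd
    have hj2 : 2 ≤ j := by
      have h2 := Subgroup.card_le_of_le hle
      rw [hzc, hjC] at h2
      exact (Nat.pow_le_pow_iff_right hp.one_lt).1 h2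
    have hjne3 : j ≠ 3 := by
      intro h3
      have htop : Subgroup.centralizer ({a} : Set Γ) = ⊤ :=
        Subgroup.eq_top_of_card_eq _ (by rw [hjC, h3, hcard])
      have haZ : a ∈ Subgroup.center Γ := by
        rw [Subgroup.mem_center_iff]
        intro g
        have : g ∈ Subgroup.centralizer ({a} : Set Γ) := htop ▸ Subgroup.mem_top g
        exact (Subgroup.mem_centralizer_iff.1 this a rfl).symm
      have hle2 : Subgroup.zpowers a ≤ Subgroup.center Γ := Subgroup.zpowers_le.2 haZ
      have := Subgroup.card_le_of_le hle2
      rw [hzc, hZ1] at this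
      nlinarith [hp.one_lt]
    symm
    apply Subgroup.eq_of_le_of_card_ge hle
    rw [hzc, hjC]
    exact Nat.pow_le_pow_right hp.pos (by omega)
  -- center ≤ ⟨a^p⟩
  have hZle : Subgroup.center Γ ≤ Subgroup.zpowers (a ^ p) := by
    intro x hx
    have hxa : x ∈ Subgroup.zpowers a := hC ▸ Subgroup.center_le_centralizer {a} hx
    obtain ⟨n, (hn : a ^ n = x)⟩ := hxa
    have hxp : x ^ p = 1 :=
      orderOf_dvd_iff_pow_eq_one.1 (hZ1 ▸ Subgroup.orderOf_dvd_natCard _ hx)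
    have hdvd : ((p : ℤ) ^ 2) ∣ n * p := by
      have h0 : a ^ (n * (p : ℤ)) = 1 := by
        rw [zpow_mul, hn, zpow_natCast, hxp]
      have h2 := orderOf_dvd_iff_zpow_eq_one.2 h0
      rw [ha] at h2
      exact_mod_cast h2
    have hpn : (p : ℤ) ∣ n := by
      have hpne : (p : ℤ) ≠ 0 := by exact_mod_cast hp.ne_zero
      have h3 : (p : ℤ) * p ∣ n * p := by rw [← sq]; exact hdvd
      exact (mul_dvd_mul_iff_right hpne).1 (by rwa [mul_comm (p : ℤ) p] at h3)
    obtain ⟨m, hm⟩ := hpn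
    refine ⟨m, ?_⟩
    show (a ^ p) ^ m = x
    rw [← hn, hm, ← zpow_natCast a p, ← zpow_mul]
  -- commutator ≤ center
  have hcommZ : commutator Γ ≤ Subgroup.center Γ := by
    have hq : Nat.card (Γ ⧸ Subgroup.center Γ) = p ^ 2 := by
      have h := Subgroup.card_eq_card_quotient_mul_card_subgroup (Subgroup.center Γ)
      rw [hcard, hZ1] at h
      nlinarith [Nat.card_pos (α := Γ ⧸ Subgroup.center Γ), hp.pos]
    have habel := IsPGroup.commutative_of_card_eq_prime_sq hq
    rw [commutator_def, Subgroup.commutator_le]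
    intro g _ h _
    have h1 : (QuotientGroup.mk' (Subgroup.center Γ)) ⁅g, h⁆ = 1 := by
      rw [map_commutatorElement, commutatorElement_eq_one_iff_mul_comm]
      exact habel _ _
    rwa [← MonoidHom.mem_ker, QuotientGroup.ker_mk'] at h1
  -- φ a = a⁻¹
  have hφa : φ a = a⁻¹ := by
    obtain ⟨t, (ht : (a ^ p) ^ t = φ a * a)⟩ := hZle (hcommZ (hkey a))
    set j : ℤ := (p : ℤ) * t - 1 with hj
    have hφa' : φ a = a ^ j := by
      have h1 : φ a = (a ^ p) ^ t * a⁻¹ := by rw [ht]; group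
      rw [h1, ← zpow_natCast a p, ← zpow_mul, hj]
      rw [zpow_sub, zpow_one]
    have hsq : a ^ (j * j - 1) = 1 := by
      have h2 : φ (φ a) = a := hφφ a
      rw [hφa', map_zpow, hφa', ← zpow_mul] at h2
      rw [zpow_sub, h2, zpow_one, mul_inv_cancel]
    have hdvd : ((p : ℤ) ^ 2) ∣ j * j - 1 := by
      have h2 := orderOf_dvd_iff_zpow_eq_one.2 hsq
      rw [ha] at h2
      exact_mod_cast h2
    have hpt : (p : ℤ) ∣ t := by
      have hfac : j * j - 1 = ((p : ℤ) * ((p : ℤ) * t - 2)) * t := by rw [hj]; ring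
      rw [hfac, pow_two] at hdvd
      have hpne : (p : ℤ) ≠ 0 := by exact_mod_cast hp.ne_zero
      have h3 : (p : ℤ) ∣ ((p : ℤ) * t - 2) * t := by
        rcases hdvd with ⟨c, hc⟩
        exact ⟨c, mul_left_cancel₀ hpne (by linear_combination hc)⟩
      have hprime : Prime (p : ℤ) := Nat.prime_iff_prime_int.1 hp
      rcases hprime.dvd_mul.1 h3 with h4 | h4
      · exfalso
        have h5 : (p : ℤ) ∣ 2 := by
          have h6 : (p : ℤ) ∣ (p : ℤ) * t := ⟨t, rfl⟩
          have := dvd_sub h6 h4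
          simpa using this
        have h7 : p ∣ 2 := by exact_mod_cast h5
        exact hp2 ((Nat.prime_dvd_prime_iff_eq hp Nat.prime_two).1 h7)
      · exact h4
    obtain ⟨u, hu⟩ := hpt
    have hj1 : a ^ (j + 1) = 1 := by
      refine orderOf_dvd_iff_zpow_eq_one.1 ?_
      rw [ha]
      refine ⟨u, ?_⟩
      push_cast
      rw [hj, hu]; ring
    rw [hφa']
    calc a ^ j = a ^ (j + 1) * a⁻¹ := by rw [zpow_add, zpow_one]; group
      _ = a⁻¹ := by rw [hj1, one_mul]
  -- choose b not commuting with a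
  obtain ⟨b, hb⟩ : ∃ b : Γ, ¬ a * b = b * a := by
    by_contra h
    push_neg at h
    have htop : Subgroup.centralizer ({a} : Set Γ) = ⊤ := by
      rw [Subgroup.eq_top_iff']
      intro g
      exact Subgroup.mem_centralizer_iff.2 (by rintro x (rfl : x = a); exact h g)
    rw [hC] at htop
    rw [htop, Subgroup.card_top, hcard] at hzc
    nlinarith [hp.one_lt]
  set z : Γ := ⁅a, b⁆ with hzdef
  have hzcomm : z ∈ commutator Γ :=
    Subgroup.commutator_mem_commutator (Subgroup.mem_top a) (Subgroup.mem_top b)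
  have hzZ : z ∈ Subgroup.center Γ := hcommZ hzcomm
  have hzc' : ∀ g : Γ, g * z = z * g := fun g => Subgroup.mem_center_iff.1 hzZ g
  have hzne : z ≠ 1 := by
    intro h1
    exact hb (commutatorElement_eq_one_iff_mul_comm.1 h1)
  -- φ z = z⁻¹ since z is a power of a
  have hφz1 : φ z = z⁻¹ := by
    have hza : z ∈ Subgroup.zpowers a := by
      have h1 : z ∈ Subgroup.zpowers (a ^ p) := hZle hzZ
      have h2 : Subgroup.zpowers (a ^ p) ≤ Subgroup.zpowers a :=
        Subgroup.zpowers_le.2 ⟨(p : ℤ), zpow_natCast a p⟩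
      exact h2 h1
    obtain ⟨n, (hn : a ^ n = z)⟩ := hza
    rw [← hn, map_zpow, hφa, inv_zpow]
  -- φ z = z via the commutator computation
  have hφz2 : φ z = z := by
    obtain ⟨w, hwZ, hw⟩ : ∃ w, w ∈ Subgroup.center Γ ∧ φ b = w * b⁻¹ := by
      refine ⟨φ b * b, hcommZ (hkey b), ?_⟩
      group
    have hwc : ∀ g : Γ, g * w = w * g := fun g => Subgroup.mem_center_iff.1 hwZ g
    have h1 : φ z = ⁅φ a, φ b⁆ := map_commutatorElement (φ : Γ →* Γ) a b
    rw [hφa, hw] at h1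
    -- ⁅a⁻¹, w * b⁻¹⁆ = a⁻¹ * b⁻¹ * a * b
    have h2 : ⁅a⁻¹, w * b⁻¹⁆ = a⁻¹ * b⁻¹ * a * b := by
      rw [commutatorElement_def]
      calc a⁻¹ * (w * b⁻¹) * a⁻¹⁻¹ * (w * b⁻¹)⁻¹
          = a⁻¹ * w * (b⁻¹ * a * b) * w⁻¹ := by group
        _ = w * a⁻¹ * (b⁻¹ * a * b) * w⁻¹ := by rw [← hwc a⁻¹]
        _ = w * (a⁻¹ * b⁻¹ * a * b) * w⁻¹ := by group
        _ = a⁻¹ * b⁻¹ * a * b * w * w⁻¹ := by rw [hwc (a⁻¹ * b⁻¹ * a * b)]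
        _ = a⁻¹ * b⁻¹ * a * b := by group
    -- a⁻¹ * b⁻¹ * a * b = z since z is central
    have h3 : a⁻¹ * b⁻¹ * a * b = z := by
      have hab : a * b = z * (b * a) := by rw [hzdef, commutatorElement_def]; group
      calc a⁻¹ * b⁻¹ * a * b = a⁻¹ * b⁻¹ * (a * b) := by group
        _ = a⁻¹ * b⁻¹ * (z * (b * a)) := by rw [hab]
        _ = a⁻¹ * (b⁻¹ * z) * b * a := by group
        _ = a⁻¹ * (z * b⁻¹) * b * a := by rw [hzc' b⁻¹]
        _ = a⁻¹ * z * a := by group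
        _ = z * a⁻¹ * a := by rw [← hzc' a⁻¹]
        _ = z := by group
    rw [h1, h2, h3]
  -- conclude z² = 1, impossible in odd-order group
  have hz2 : z ^ 2 = 1 := by
    have h1 : z⁻¹ = z := hφz1.symm.trans hφz2
    rw [pow_two, mul_eq_one_iff_eq_inv]
    exact h1.symm
  have h2 : orderOf z ∣ 2 := orderOf_dvd_iff_pow_eq_one.2 hz2
  have h3 : orderOf z ∣ p ^ 3 := hcard ▸ orderOf_dvd_natCard z
  have hcop : Nat.Coprime 2 (p ^ 3) := (hodd.pow).coprime_two_left
  have h4 : orderOf z = 1 := Nat.eq_one_of_dvd_coprimes hcop h2 h3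
  exact hzne (orderOf_eq_one_iff.1 h4)
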